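/- Let π₂ be a positive probability density on ℝ with CDF F₂. If F₂(B+1)/(1 - F₂(B+1)) can be made arbitrarily large by choosing B large, and π₁ is a positive density with (ln π₁)' monotonically decreasing and tending to +∞ as x → -∞, then lim_{θ₁→∞} [∫ π₁(u-θ₁) F₂(u)(1-F₃(u)) du] / [∫ π₁(u-θ₁)(1-F₂(u))(1-F₃(u)) du] = +∞, where F₃ is the CDF of a third positive density π₃. -/

import Mathlib

open MeasureTheory Filter

lemma aux_cdf_facts (π : ℝ → ℝ) (hpos : ∀ x, 0 < π x) (hint : ∫ x : ℝ, π x = 1) (x : ℝ) :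
    (0 < ∫ t in Set.Iic x, π t) ∧
      ((∫ t in Set.Iic x, π t) + (∫ t in Set.Ioi x, π t) = 1) ∧
      (0 < ∫ t in Set.Ioi x, π t) := by
  have hi : Integrable π := by
    by_contra h
    rw [integral_undef h] at hint; norm_num at hint
  have hsupp : Function.support π = Set.univ :=
    Set.eq_univ_of_forall fun t => (hpos t).ne'
  have h1 : (∫ t in Set.Iic x, π t) + (∫ t in Set.Ioi x, π t) = 1 :=
    (intervalIntegral.integral_Iic_add_Ioi hi.integrableOn hi.integrableOn).trans hint
  refine ⟨?_, h1, ?_⟩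
  · rw [setIntegral_pos_iff_support_of_nonneg_ae
      (Filter.Eventually.of_forall fun t => (hpos t).le) hi.integrableOn]
    simp [hsupp, Real.volume_Iic]
  · rw [setIntegral_pos_iff_support_of_nonneg_ae
      (Filter.Eventually.of_forall fun t => (hpos t).le) hi.integrableOn]
    simp [hsupp, Real.volume_Ioi]

theorem ratio_tendsto_atTop
    (π₁ π₂ π₃ : ℝ → ℝ)
    (h₁_pos : ∀ x, 0 < π₁ x) (h₂_pos : ∀ x, 0 < π₂ x) (h₃_pos : ∀ x, 0 < π₃ x)
    (h₁_int : ∫ x : ℝ, π₁ x = 1) (h₂_int : ∫ x : ℝ, π₂ x = 1) (h₃_int : ∫ x : ℝ, π₃ x = 1)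
    (F₂ F₃ : ℝ → ℝ)
    (hF₂ : ∀ x, F₂ x = ∫ t in Set.Iic x, π₂ t)
    (hF₃ : ∀ x, F₃ x = ∫ t in Set.Iic x, π₃ t)
    (hodds : Tendsto (fun B : ℝ => F₂ (B + 1) / (1 - F₂ (B + 1))) atTop atTop)
    (d : ℝ → ℝ)
    (hd : ∀ x, HasDerivAt (fun x => Real.log (π₁ x)) (d x) x)
    (hd_anti : StrictAnti d)
    (hd_lim : Tendsto d atBot atTop)
    (hInt_num : ∀ θ : ℝ, Integrable (fun u => π₁ (u - θ) * (F₂ u * (1 - F₃ u))))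
    (hInt_den : ∀ θ : ℝ, Integrable (fun u => π₁ (u - θ) * ((1 - F₂ u) * (1 - F₃ u)))) :
    Tendsto (fun θ : ℝ =>
        (∫ u : ℝ, π₁ (u - θ) * (F₂ u * (1 - F₃ u))) /
        (∫ u : ℝ, π₁ (u - θ) * ((1 - F₂ u) * (1 - F₃ u))))
      atTop atTop := by
  have hπ₂i : Integrable π₂ := by
    by_contra h; rw [integral_undef h] at h₂_int; norm_num at h₂_int
  have hπ₃i : Integrable π₃ := by
    by_contra h; rw [integral_undef h] at h₃_int; norm_num at h₃_int
  have h₂f := aux_cdf_facts π₂ h₂_pos h₂_int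
  have h₃f := aux_cdf_facts π₃ h₃_pos h₃_int
  have hF₂pos : ∀ x, 0 < F₂ x := fun x => (hF₂ x) ▸ (h₂f x).1
  have hF₃pos : ∀ x, 0 < F₃ x := fun x => (hF₃ x) ▸ (h₃f x).1
  have hF₂lt : ∀ x, F₂ x < 1 := fun x => by
    have h1 := (h₂f x).2.1; have h2 := (h₂f x).2.2; rw [hF₂ x]; linarith
  have hF₃lt : ∀ x, F₃ x < 1 := fun x => by
    have h1 := (h₃f x).2.1; have h2 := (h₃f x).2.2; rw [hF₃ x]; linarith
  have hF₂mono : Monotone F₂ := by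
    intro x y hxy
    rw [hF₂ x, hF₂ y]
    exact setIntegral_mono_set hπ₂i.integrableOn
      (Filter.Eventually.of_forall fun t => (h₂_pos t).le)
      (HasSubset.Subset.eventuallyLE (Set.Iic_subset_Iic.2 hxy))
  have hF₃mono : Monotone F₃ := by
    intro x y hxy
    rw [hF₃ x, hF₃ y]
    exact setIntegral_mono_set hπ₃i.integrableOn
      (Filter.Eventually.of_forall fun t => (h₃_pos t).le)
      (HasSubset.Subset.eventuallyLE (Set.Iic_subset_Iic.2 hxy))
  -- log-density machinery
  set L : ℝ → ℝ := fun x => Real.log (π₁ x) with hLdef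
  have hLexp : ∀ x, π₁ x = Real.exp (L x) := fun x => (Real.exp_log (h₁_pos x)).symm
  have hLcont : Continuous L := by
    have : Differentiable ℝ L := fun x => (hd x).differentiableAt
    exact this.continuous
  rw [tendsto_atTop]
  intro b
  set M := max b 1 with hMdef
  have hM1 : (1:ℝ) ≤ M := le_max_right _ _
  have hMb : b ≤ M := le_max_left _ _
  clear_value M
  obtain ⟨B₀, hB₀⟩ := (hodds.eventually_ge_atTop (2 * M)).exists
  set A := B₀ + 1 with hAdef
  have h1F₂A : 0 < 1 - F₂ A := by linarith [hF₂lt A]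
  have hA' : 2 * M * (1 - F₂ A) ≤ F₂ A := (le_div_iff₀ h1F₂A).1 hB₀
  clear_value A
  set c := (1 - F₂ (A + 1)) * (1 - F₃ (A + 1)) with hcdef
  have hc : 0 < c :=
    mul_pos (by linarith [hF₂lt (A+1)]) (by linarith [hF₃lt (A+1)])
  set K := max (2 / c) 1 with hKdef
  have hK1 : (1:ℝ) ≤ K := le_max_right _ _
  have hK0 : (0:ℝ) < K := by linarith
  have hKc : 1 / K ≤ c / 2 := by
    rw [div_le_div_iff₀ hK0 two_pos]
    have h2c := (div_le_iff₀ hc).1 (le_max_left (2 / c) 1)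
    nlinarith
  clear_value c K
  obtain ⟨t₀, ht₀⟩ := (eventually_atBot).1 (hd_lim.eventually_ge_atTop K)
  -- exponential comparison of π₁ on Iic t₀
  have hexpbd : ∀ x y : ℝ, x ≤ y → y ≤ t₀ → π₁ x ≤ π₁ y * Real.exp (K * (x - y)) := by
    have hg : ∀ x : ℝ, HasDerivAt (fun x => L x - K * x) (d x - K) x := by
      intro x
      exact (hd x).sub (by simpa using (hasDerivAt_id x).const_mul K)
    have hgm : MonotoneOn (fun x => L x - K * x) (Set.Iic t₀) := by
      refine (strictMonoOn_of_deriv_pos (convex_Iic t₀) ?_ ?_).monotoneOn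
      · exact (hLcont.sub (continuous_const.mul continuous_id)).continuousOn
      intro x hx
      rw [interior_Iic] at hx
      rw [(hg x).deriv]
      have h1 : d t₀ < d x := hd_anti hx
      have h2 : K ≤ d t₀ := ht₀ t₀ le_rfl
      linarith
    intro x y hxy hy
    have hgxy := hgm (Set.mem_Iic.2 (hxy.trans hy)) (Set.mem_Iic.2 hy) hxy
    simp only at hgxy
    have hlog : L x ≤ L y + K * (x - y) := by
      have := mul_sub K x y
      linarith
    calc π₁ x = Real.exp (L x) := hLexp x
      _ ≤ Real.exp (L y + K * (x - y)) := Real.exp_le_exp.2 hlog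
      _ = π₁ y * Real.exp (K * (x - y)) := by rw [Real.exp_add, ← hLexp y]
  have hmono : ∀ x y : ℝ, x ≤ y → y ≤ t₀ → π₁ x ≤ π₁ y := by
    intro x y hxy hy
    have h := hexpbd x y hxy hy
    have he : Real.exp (K * (x - y)) ≤ 1 := by
      rw [Real.exp_le_one_iff]
      nlinarith
    nlinarith [h₁_pos y]
  filter_upwards [eventually_ge_atTop (A + 1 - t₀)] with θ hθ
  set t := A - θ with htdef
  have htt₀ : t + 1 ≤ t₀ := by rw [htdef]; linarith
  clear_value t
  have hden_i := hInt_den θ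
  have hnum_i := hInt_num θ
  have hden_nn : ∀ u, 0 ≤ π₁ (u - θ) * ((1 - F₂ u) * (1 - F₃ u)) := fun u =>
    mul_nonneg (h₁_pos _).le
      (mul_nonneg (by linarith [hF₂lt u]) (by linarith [hF₃lt u]))
  have hnum_nn : ∀ u, 0 ≤ π₁ (u - θ) * (F₂ u * (1 - F₃ u)) := fun u =>
    mul_nonneg (h₁_pos _).le
      (mul_nonneg (hF₂pos u).le (by linarith [hF₃lt u]))
  -- integrability of the exponential bound
  have hexp_int : IntegrableOn (fun u => Real.exp (K * (u - A))) (Set.Iic A) := by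
    have hmeas : AEStronglyMeasurable (fun u : ℝ => Real.exp (K * (u - A)))
        (volume.restrict (Set.Iic A)) :=
      (Real.continuous_exp.comp
        (continuous_const.mul (continuous_id.sub continuous_const))).aestronglyMeasurable
    refine ((integrableOn_exp_Iic A).mul_const (Real.exp (-A))).mono hmeas ?_
    rw [ae_restrict_iff' measurableSet_Iic]
    refine Filter.Eventually.of_forall fun u hu => ?_
    have hu' : u - A ≤ 0 := by simpa using hu
    rw [Real.norm_of_nonneg (Real.exp_pos _).le, Real.norm_of_nonneg
      (mul_nonneg (Real.exp_pos _).le (Real.exp_pos _).le), ← Real.exp_add]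
    exact Real.exp_le_exp.2 (by nlinarith)
  have hexp_eval : ∫ u in Set.Iic A, Real.exp (K * (u - A)) = 1 / K := by
    have hderiv : ∀ u ∈ Set.Iic A,
        HasDerivAt (fun u => Real.exp (K * (u - A)) / K) (Real.exp (K * (u - A))) u := by
      intro u _
      have h1 : HasDerivAt (fun u : ℝ => K * (u - A)) K u := by
        simpa using ((hasDerivAt_id u).sub_const A).const_mul K
      have h2 := (h1.exp).div_const K
      simpa [mul_div_cancel_right₀ _ hK0.ne'] using h2
    have htend : Tendsto (fun u => Real.exp (K * (u - A)) / K) atBot (nhds 0) := by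
      have h1 : Tendsto (fun u : ℝ => K * (u - A)) atBot atBot := by
        apply Tendsto.const_mul_atBot hK0
        simpa [sub_eq_add_neg] using tendsto_atBot_add_const_right atBot (-A) tendsto_id
      have h2 := (Real.tendsto_exp_atBot.comp h1).div_const K
      simpa using h2
    have := integral_Iic_of_hasDerivAt_of_tendsto' hderiv hexp_int htend
    simpa using this
  -- the left part of the denominator is small
  have hDm : (∫ u in Set.Iic A, π₁ (u - θ) * ((1 - F₂ u) * (1 - F₃ u)))
      ≤ π₁ t * (1 / K) := by
    have hub : ∀ u ∈ Set.Iic A,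
        π₁ (u - θ) * ((1 - F₂ u) * (1 - F₃ u)) ≤ π₁ t * Real.exp (K * (u - A)) := by
      intro u hu
      have hu' : u ≤ A := hu
      have h1 : (1 - F₂ u) * (1 - F₃ u) ≤ 1 :=
        mul_le_one₀ (by linarith [hF₂pos u]) (by linarith [hF₃lt u]) (by linarith [hF₃pos u])
      have h2 : π₁ (u - θ) * ((1 - F₂ u) * (1 - F₃ u)) ≤ π₁ (u - θ) :=
        by nlinarith [h₁_pos (u - θ), hden_nn u]
      have h3 : π₁ (u - θ) ≤ π₁ t * Real.exp (K * ((u - θ) - t)) :=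
        hexpbd (u - θ) t (by rw [htdef]; linarith) (by linarith)
      have h4 : (u - θ) - t = u - A := by rw [htdef]; ring
      rw [h4] at h3
      linarith
    calc (∫ u in Set.Iic A, π₁ (u - θ) * ((1 - F₂ u) * (1 - F₃ u)))
        ≤ ∫ u in Set.Iic A, π₁ t * Real.exp (K * (u - A)) :=
          setIntegral_mono_on hden_i.integrableOn (hexp_int.const_mul _)
            measurableSet_Iic hub
      _ = π₁ t * ∫ u in Set.Iic A, Real.exp (K * (u - A)) := integral_const_mul _ _
      _ = π₁ t * (1 / K) := by rw [hexp_eval]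
  -- the right part of the denominator is not small
  have hDp_lb : c * π₁ t ≤ ∫ u in Set.Ioi A, π₁ (u - θ) * ((1 - F₂ u) * (1 - F₃ u)) := by
    have hpt : ∀ u ∈ Set.Ioc A (A + 1),
        π₁ t * c ≤ π₁ (u - θ) * ((1 - F₂ u) * (1 - F₃ u)) := by
      intro u hu
      obtain ⟨hu1, hu2⟩ := hu
      have hπ : π₁ t ≤ π₁ (u - θ) := by
        refine hmono t (u - θ) (by linarith [htdef]) (by linarith [htdef, htt₀])
      have hcle : c ≤ (1 - F₂ u) * (1 - F₃ u) := by
        have hm2 : F₂ u ≤ F₂ (A + 1) := hF₂mono hu2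
        have hm3 : F₃ u ≤ F₃ (A + 1) := hF₃mono hu2
        rw [hcdef]
        exact mul_le_mul (by linarith) (by linarith)
          (by linarith [hF₃lt (A+1)]) (by linarith [hF₂lt u])
      exact mul_le_mul hπ hcle hc.le (h₁_pos _).le
    have h1 : ∫ _u in Set.Ioc A (A + 1), π₁ t * c
        ≤ ∫ u in Set.Ioc A (A + 1), π₁ (u - θ) * ((1 - F₂ u) * (1 - F₃ u)) :=
      setIntegral_mono_on (integrableOn_const measure_Ioc_lt_top.ne)
        hden_i.integrableOn measurableSet_Ioc hpt
    have h2 : ∫ _u in Set.Ioc A (A + 1), π₁ t * c = π₁ t * c := by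
      rw [setIntegral_const]
      simp [Real.volume_Ioc]
    have h3 : (∫ u in Set.Ioc A (A + 1), π₁ (u - θ) * ((1 - F₂ u) * (1 - F₃ u)))
        ≤ ∫ u in Set.Ioi A, π₁ (u - θ) * ((1 - F₂ u) * (1 - F₃ u)) :=
      setIntegral_mono_set hden_i.integrableOn
        (Filter.Eventually.of_forall fun u => hden_nn u)
        (HasSubset.Subset.eventuallyLE Set.Ioc_subset_Ioi_self)
    calc c * π₁ t = π₁ t * c := mul_comm _ _
      _ ≤ _ := by linarith
  -- the numerator dominates
  have hNum_lb : 2 * M * (∫ u in Set.Ioi A, π₁ (u - θ) * ((1 - F₂ u) * (1 - F₃ u)))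
      ≤ ∫ u : ℝ, π₁ (u - θ) * (F₂ u * (1 - F₃ u)) := by
    have hsplit : (∫ u : ℝ, π₁ (u - θ) * (F₂ u * (1 - F₃ u)))
        = (∫ u in Set.Iic A, π₁ (u - θ) * (F₂ u * (1 - F₃ u)))
          + ∫ u in Set.Ioi A, π₁ (u - θ) * (F₂ u * (1 - F₃ u)) :=
      (intervalIntegral.integral_Iic_add_Ioi hnum_i.integrableOn hnum_i.integrableOn).symm
    have h0 : 0 ≤ ∫ u in Set.Iic A, π₁ (u - θ) * (F₂ u * (1 - F₃ u)) :=
      setIntegral_nonneg measurableSet_Iic fun u _ => hnum_nn u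
    have h1 : (∫ u in Set.Ioi A, 2 * M * (π₁ (u - θ) * ((1 - F₂ u) * (1 - F₃ u))))
        ≤ ∫ u in Set.Ioi A, π₁ (u - θ) * (F₂ u * (1 - F₃ u)) := by
      refine setIntegral_mono_on ((hden_i.const_mul (2 * M)).integrableOn)
        hnum_i.integrableOn measurableSet_Ioi ?_
      intro u hu
      have hm : F₂ A ≤ F₂ u := hF₂mono (le_of_lt hu)
      have hf2 : 2 * M * (1 - F₂ u) ≤ F₂ u := by nlinarith
      have key := mul_le_mul_of_nonneg_left hf2
        (mul_nonneg (h₁_pos (u - θ)).le (by linarith [hF₃lt u] : (0:ℝ) ≤ 1 - F₃ u))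
      linear_combination key
    have h2 : (∫ u in Set.Ioi A, 2 * M * (π₁ (u - θ) * ((1 - F₂ u) * (1 - F₃ u))))
        = 2 * M * ∫ u in Set.Ioi A, π₁ (u - θ) * ((1 - F₂ u) * (1 - F₃ u)) :=
      integral_const_mul _ _
    linarith
  -- assemble
  set Dp := ∫ u in Set.Ioi A, π₁ (u - θ) * ((1 - F₂ u) * (1 - F₃ u)) with hDpdef
  set Dm := ∫ u in Set.Iic A, π₁ (u - θ) * ((1 - F₂ u) * (1 - F₃ u)) with hDmdef
  clear_value Dp Dm
  have hDp_pos : 0 < Dp := lt_of_lt_of_le (mul_pos hc (h₁_pos t)) hDp_lb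
  have hDsplit : (∫ u : ℝ, π₁ (u - θ) * ((1 - F₂ u) * (1 - F₃ u))) = Dm + Dp := by
    rw [hDmdef, hDpdef]
    exact (intervalIntegral.integral_Iic_add_Ioi hden_i.integrableOn hden_i.integrableOn).symm
  have hDm_nn : 0 ≤ Dm := by
    rw [hDmdef]
    exact setIntegral_nonneg measurableSet_Iic fun u _ => hden_nn u
  have hDm_le : Dm ≤ Dp := by
    have h1 : π₁ t * (1 / K) ≤ π₁ t * (c / 2) :=
      mul_le_mul_of_nonneg_left hKc (h₁_pos t).le
    have h2 : π₁ t * (c / 2) = (c * π₁ t) / 2 := by ring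
    linarith [hDp_lb, hDp_pos]
  have hD_pos : 0 < ∫ u : ℝ, π₁ (u - θ) * ((1 - F₂ u) * (1 - F₃ u)) := by
    rw [hDsplit]; linarith
  have hD_le : (∫ u : ℝ, π₁ (u - θ) * ((1 - F₂ u) * (1 - F₃ u))) ≤ 2 * Dp := by
    rw [hDsplit]; linarith
  have hM0 : (0:ℝ) < M := by linarith
  have hfinal : (2 * M * Dp) / (2 * Dp)
      ≤ (∫ u : ℝ, π₁ (u - θ) * (F₂ u * (1 - F₃ u))) /
        (∫ u : ℝ, π₁ (u - θ) * ((1 - F₂ u) * (1 - F₃ u))) := by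
    have hnn : (0:ℝ) ≤ 2 * M * Dp :=
      mul_nonneg (by linarith : (0:ℝ) ≤ 2 * M) hDp_pos.le
    exact div_le_div₀ (le_trans hnn hNum_lb) hNum_lb hD_pos hD_le
  have h2Dp : (2 * Dp) ≠ 0 := (by linarith : (0:ℝ) < 2 * Dp).ne'
  have heq : (2 * M * Dp) / (2 * Dp) = M := by
    rw [show 2 * M * Dp = M * (2 * Dp) by ring, mul_div_cancel_right₀ _ h2Dp]
  rw [heq] at hfinal
  linarith
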